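/- Let (A, ¯(), ⊕, ·, 1) be an IMM* algebra such that for each a, b, c ∈ A the equation 1̄⊕x = (b̄·a)⊕(b·c) has a solution x in A, and let (A, p, 1̄, 1̄⊕1, 1) be its corresponding mobi algebra, i.e., 1̄ ⊕ p(a,b,c) = (b̄·a)⊕(b·c) for all a, b, c ∈ A. Then the multiplication · is commutative (a·b = b·a for all a, b ∈ A) if and only if p(p(a1,c,b1), d, p(a2,c,b2)) = p(p(a1,d,a2), c, p(b1,d,b2)) holds for all a1, b1, a2, b2, c, d ∈ A. -/
import Mathlib


/-- A mobi algebra: a set with a ternary operation `p` and constants `e0`, `half`, `e1`. -/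
structure MobiAlgebra (A : Type*) where
  p : A → A → A → A
  e0 : A
  half : A
  e1 : A
  A1 : p e1 half e0 = half
  A2 : ∀ a, p e0 a e1 = a
  A3 : ∀ a b, p a b a = a
  A4 : ∀ a b, p a e0 b = a
  A5 : ∀ a b, p a e1 b = b
  A6 : ∀ a a' b, p a half b = p a' half b → a = a'
  A7 : ∀ a b c1 c2 c3, p a (p c1 c2 c3) b = p (p a c1 b) c2 (p a c3 b)
  A8 : ∀ a1 a2 b1 b2 c,
    p (p a1 c b1) half (p a2 c b2) = p (p a1 half a2) c (p b1 half b2)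

/-- An IMM* algebra: like an IMM algebra but with cancellative `⊕`
(axioms (C1)-(C9)). -/
structure IMMStar (C : Type*) where
  inv : C → C
  oplus : C → C → C
  mul : C → C → C
  one : C
  C1 : ∀ a, oplus a a = a
  C2 : ∀ a b, oplus a b = oplus b a
  C3 : ∀ a a' b, oplus a b = oplus a' b → a = a'
  C4 : ∀ a b c d, oplus (oplus a b) (oplus c d) = oplus (oplus a c) (oplus b d)
  C5 : ∀ a b c, mul a (mul b c) = mul (mul a b) c
  C6 : ∀ a, mul a one = a
  C6' : ∀ a, mul one a = a
  C7 : ∀ a b c, mul a (oplus b c) = oplus (mul a b) (mul a c)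
  C7' : ∀ a b c, mul (oplus a b) c = oplus (mul a c) (mul b c)
  C8 : ∀ a, mul a (inv one) = inv one
  C8' : ∀ a, mul (inv one) a = inv one
  C9 : ∀ a, oplus (inv a) a = oplus (inv one) one

/-- Proposition 6.5: for an IMM* algebra satisfying the solvability
condition, with its corresponding mobi algebra, the multiplication is
commutative iff the generalized medial law holds. -/
theorem IMMStar_comm_iff_medial {A : Type*} (S : IMMStar A)
    (hsol : ∀ a b c : A, ∃ x : A,
      S.oplus (S.inv S.one) x = S.oplus (S.mul (S.inv b) a) (S.mul b c))
    (M : MobiAlgebra A)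
    (h0 : M.e0 = S.inv S.one)
    (hh : M.half = S.oplus (S.inv S.one) S.one)
    (h1 : M.e1 = S.one)
    (hp : ∀ a b c, S.oplus (S.inv S.one) (M.p a b c) =
      S.oplus (S.mul (S.inv b) a) (S.mul b c)) :
    (∀ a b, S.mul a b = S.mul b a) ↔
    (∀ a1 b1 a2 b2 c d,
      M.p (M.p a1 c b1) d (M.p a2 c b2) =
        M.p (M.p a1 d a2) c (M.p b1 d b2)) := by
  have cancel : ∀ x y y' : A, S.oplus x y = S.oplus x y' → y = y' := by
    intro x y y' h
    exact S.C3 y y' x (by rw [S.C2 y x, S.C2 y' x]; exact h)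
  have expand : ∀ e a c b, S.oplus (S.inv S.one) (S.mul e (M.p a c b)) =
      S.oplus (S.mul (S.mul e (S.inv c)) a) (S.mul (S.mul e c) b) := by
    intro e a c b
    have h := congrArg (S.mul e) (hp a c b)
    rw [S.C7, S.C7, S.C8, S.C5, S.C5] at h
    exact h
  have key : ∀ a1 b1 a2 b2 c d,
      S.oplus (S.oplus (S.inv S.one) (S.inv S.one))
        (S.oplus (S.inv S.one) (M.p (M.p a1 c b1) d (M.p a2 c b2))) =
      S.oplus
        (S.oplus (S.mul (S.mul (S.inv d) (S.inv c)) a1) (S.mul (S.mul (S.inv d) c) b1))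
        (S.oplus (S.mul (S.mul d (S.inv c)) a2) (S.mul (S.mul d c) b2)) := by
    intro a1 b1 a2 b2 c d
    rw [hp, S.C4, expand (S.inv d) a1 c b1, expand d a2 c b2]
  constructor
  · intro hc a1 b1 a2 b2 c d
    have h := key a1 b1 a2 b2 c d
    have h' := key a1 a2 b1 b2 d c
    have hr : S.oplus
        (S.oplus (S.mul (S.mul (S.inv d) (S.inv c)) a1) (S.mul (S.mul (S.inv d) c) b1))
        (S.oplus (S.mul (S.mul d (S.inv c)) a2) (S.mul (S.mul d c) b2)) =
      S.oplus
        (S.oplus (S.mul (S.mul (S.inv c) (S.inv d)) a1) (S.mul (S.mul (S.inv c) d) a2))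
        (S.oplus (S.mul (S.mul c (S.inv d)) b1) (S.mul (S.mul c d) b2)) := by
      rw [hc (S.inv d) (S.inv c), hc (S.inv d) c, hc d (S.inv c), hc d c, S.C4]
    exact cancel _ _ _ (cancel _ _ _ (h.trans (hr.trans h'.symm)))
  · intro hmed a b
    have h1 := key (S.inv S.one) (S.inv S.one) (S.inv S.one) S.one b a
    have h2 := key (S.inv S.one) (S.inv S.one) (S.inv S.one) S.one a b
    rw [S.C8, S.C8, S.C8, S.C6] at h1 h2
    have hm := hmed (S.inv S.one) (S.inv S.one) (S.inv S.one) S.one b a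
    rw [hm] at h1
    exact cancel _ _ _ (cancel _ _ _ (h1.symm.trans h2))
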